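/- arXiv:2604.20005 — 2 statements merged into one kernel-verified Lean document; each statement's English description precedes it below -/
import Mathlib

section
/- Let S be a regular F-finite ring of characteristic p with a p-basis x, and let π : S → R = S/J be a surjection. Then Gabber's construction G(R; π(x)) applied to R with the p-generating set π(x) is canonically isomorphic to the J-adic completion of S; in particular the unique lift π_∞ : S → G(R;π(x)) of π compatible with p-generators is the completion map S → Ŝ^J. -/
/-- The image of the Frobenius `r ↦ r^p` of `R`, as a subring. -/
def pPowers (R : Type*) [CommRing R] (p : ℕ) : Subring R :=
  Subring.closure (Set.range fun r : R => r ^ p)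

lemma mem_pPowers_iff {R : Type*} [CommRing R] (p : ℕ) [Fact p.Prime] [CharP R p] (y : R) :
    y ∈ pPowers R p ↔ ∃ r, r ^ p = y := by
  unfold pPowers
  rw [show (Set.range fun r : R => r ^ p) = ((frobenius R p).range : Set R) by
    ext z; simp [frobenius_def, RingHom.mem_range, eq_comm]]
  rw [Subring.closure_eq]
  simp [RingHom.mem_range, frobenius_def]

lemma span_pow_card_mul_succ_le {R : Type*} [CommRing R] (p : ℕ) (s : Finset R) :
    (Ideal.span (s : Set R)) ^ (s.card * p + 1) ≤ Ideal.span ((· ^ p) '' (s : Set R)) := by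
  classical
  induction s using Finset.induction_on with
  | empty => simp
  | insert _ _ ha ih =>
    rename_i a s
    rw [Finset.coe_insert, Ideal.span_insert, Finset.card_insert_of_notMem ha,
      Set.image_insert_eq, Ideal.span_insert]
    calc (Ideal.span {a} ⊔ Ideal.span (s : Set R)) ^ ((s.card + 1) * p + 1)
        = (Ideal.span {a} ⊔ Ideal.span (s : Set R)) ^ (p + (s.card * p + 1)) := by ring_nf
      _ ≤ (Ideal.span {a}) ^ p ⊔ (Ideal.span (s : Set R)) ^ (s.card * p + 1) :=
          Ideal.sup_pow_add_le_pow_sup_pow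
      _ ≤ Ideal.span {a ^ p} ⊔ Ideal.span ((· ^ p) '' (s : Set R)) := by
          rw [Ideal.span_singleton_pow]
          exact sup_le_sup le_rfl ih

universe u

/-- **Gabber's construction of a regular ring with `p`-basis surjecting onto `R = S/J` is the
`J`-adic completion of `S`.**
Let `S` be a Noetherian regular `F`-finite ring of characteristic `p` with a `p`-basis `x`,
and let `π₀ : S → R = S/J` be a surjection.  Let `R_∞` (together with projections
`φproj i : R_∞ → R_i`) be the inverse limit of Gabber's tower `⋯ → R_1 → R_0 = R` attached
to the `p`-generating set `π₀(x)` of `R`, where the lifts `π_i : S → R_i` of `π₀` map the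
`p`-basis `x` of `S` bijectively onto the `p`-bases `x' i` of the `R_{i+1}`.
Then the surjection `S → R` factors uniquely through a map `π_∞ : S → R_∞`, and `π_∞` is the
`J`-adic completion map: there is a ring isomorphism `R_∞ ≅ Ŝ^J = AdicCompletion J S`
identifying `π_∞` with the canonical map `S → Ŝ^J`. -/
theorem gabber_of_quotient_eq_adicCompletion (p : ℕ) [Fact p.Prime]
    {S : Type u} [CommRing S] [IsNoetherianRing S] [CharP S p]
    [Module.Finite (pPowers S p) S]
    (n : ℕ) (x : Fin n → S)
    (hind : LinearIndependent (pPowers S p)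
      (fun b : Fin n → Fin p => ∏ i, x i ^ ((b i : ℕ))))
    (hspan : Submodule.span (pPowers S p)
      (Set.range fun b : Fin n → Fin p => ∏ i, x i ^ ((b i : ℕ))) = ⊤)
    (J : Ideal S)
    {Rinf : Type u} [CommRing Rinf] [CharP Rinf p]
    (Rt : ℕ → Type u) [∀ i, CommRing (Rt i)] [∀ i, CharP (Rt i) p]
    (φstep : ∀ i, Rt (i + 1) →+* Rt i) (ι : ∀ i, Rt i →+* Rt (i + 1))
    (φproj : ∀ i, Rinf →+* Rt i)
    (hcomp : ∀ i, (φstep i).comp (φproj (i + 1)) = φproj i)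
    (hιinj : ∀ i, Function.Injective (ι i))
    (hιφ : ∀ i (a : Rt (i + 1)), ι i (φstep i a) = a ^ p)
    (hφι : ∀ i (r : Rt i), φstep i (ι i r) = r ^ p)
    -- `R_∞` is the inverse limit of the tower:
    (hinj : ∀ a : Rinf, (∀ i, φproj i a = 0) → a = 0)
    (hsurj : ∀ a : ∀ i, Rt i, (∀ i, φstep i (a (i + 1)) = a i) → ∃ b : Rinf, ∀ i, φproj i b = a i)
    -- the lifts `π_i : S → R_i` of the surjection `π₀` with kernel `J`:
    (πt : ∀ i, S →+* Rt i)
    (hπsurj : ∀ i, Function.Surjective (πt i))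
    (hπcomp : ∀ i, (φstep i).comp (πt (i + 1)) = πt i)
    (hπ0ker : RingHom.ker (πt 0) = J)
    -- the `p`-bases of the stages of the tower, images of the `p`-basis `x` of `S`:
    (x' : ∀ i, Fin n → Rt (i + 1))
    (hind' : ∀ i, LinearIndependent (pPowers (Rt (i + 1)) p)
      (fun b : Fin n → Fin p => ∏ j, x' i j ^ ((b j : ℕ))))
    (hspan' : ∀ i, Submodule.span (pPowers (Rt (i + 1)) p)
      (Set.range fun b : Fin n → Fin p => ∏ j, x' i j ^ ((b j : ℕ))) = ⊤)
    (hπx : ∀ i j, πt (i + 1) (x j) = x' i j) :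
    ∃! πinf : S →+* Rinf, (∀ i, (φproj i).comp πinf = πt i) ∧
      ∃ e : Rinf ≃+* AdicCompletion J S,
        (e.toRingHom.comp πinf : S →+* AdicCompletion J S)
          = algebraMap S (AdicCompletion J S) := by
  classical
  have hp2 : 2 ≤ p := (Fact.out : p.Prime).two_le
  set K : ℕ → Ideal S := fun i => RingHom.ker (πt i) with hK
  -- monotonicity of kernels along the tower
  have hπcomp' : ∀ i (s : S), φstep i (πt (i + 1) s) = πt i s := by
    intro i s
    have := RingHom.congr_fun (hπcomp i) s
    simpa only [RingHom.comp_apply] using this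
  have hcomp' : ∀ i (a : Rinf), φstep i (φproj (i + 1) a) = φproj i a := by
    intro i a
    have := RingHom.congr_fun (hcomp i) a
    simpa only [RingHom.comp_apply] using this
  have h1 : ∀ i, K (i + 1) ≤ K i := by
    intro i s hs
    simp only [K, RingHom.mem_ker] at hs ⊢
    rw [← hπcomp' i s, hs, map_zero]
  -- p-th powers climb the tower
  have h2 : ∀ i, ∀ s ∈ K i, s ^ p ∈ K (i + 1) := by
    intro i s hs
    simp only [K, RingHom.mem_ker] at hs ⊢
    rw [map_pow, ← hιφ i (πt (i + 1) s), hπcomp' i s, hs, map_zero]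
  -- the p-basis argument : K (i+1) ≤ (K i)^p
  have h3 : ∀ i, K (i + 1) ≤ (K i) ^ p := by
    intro i s hs
    have hs0 : πt (i + 1) s = 0 := hs
    -- expand s in the p-basis of S
    have hmem : s ∈ Submodule.span (pPowers S p)
        (Set.range fun b : Fin n → Fin p => ∏ j, x j ^ ((b j : ℕ))) := by
      rw [hspan]; trivial
    obtain ⟨c, hc⟩ := (Submodule.mem_span_range_iff_exists_fun _).mp hmem
    choose t ht using fun b => (mem_pPowers_iff p ((c b : S))).mp (c b).2
    -- image of the expansion under πt (i+1)
    have hπs : (∑ b : Fin n → Fin p,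
        (πt (i + 1) (t b)) ^ p * ∏ j, x' i j ^ ((b j : ℕ))) = 0 := by
      have h4 := congrArg (πt (i + 1)) hc
      rw [hs0] at h4
      rw [← h4, map_sum]
      refine Finset.sum_congr rfl fun b _ => ?_
      have hsmul : (c b) • (∏ j, x j ^ ((b j : ℕ))) = (t b) ^ p * ∏ j, x j ^ ((b j : ℕ)) := by
        rw [ht b]; rfl
      rw [hsmul, map_mul, map_pow, map_prod]
      congr 1
      refine Finset.prod_congr rfl fun j _ => ?_
      rw [map_pow, hπx i j]
    -- coefficients in pPowers (Rt (i+1)) p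
    set c' : (Fin n → Fin p) → pPowers (Rt (i + 1)) p :=
      fun b => ⟨(πt (i + 1) (t b)) ^ p, (mem_pPowers_iff p _).mpr ⟨_, rfl⟩⟩ with hc'
    have hzero : ∀ b, c' b = 0 := by
      refine Fintype.linearIndependent_iff.mp (hind' i) c' ?_
      rw [← hπs]
      exact Finset.sum_congr rfl fun b _ => rfl
    have htK : ∀ b, t b ∈ K i := by
      intro b
      have h5 : (πt (i + 1) (t b)) ^ p = 0 := by
        have := hzero b
        rwa [hc', Subtype.ext_iff] at this
      have h6 : ι i (πt i (t b)) = ι i 0 := by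
        rw [map_zero, ← hπcomp' i (t b), hιφ i (πt (i + 1) (t b)), h5]
      exact hιinj i h6
    -- conclude
    rw [← hc]
    refine Ideal.sum_mem _ fun b _ => ?_
    have hsmul : (c b) • (∏ j, x j ^ ((b j : ℕ))) = (t b) ^ p * ∏ j, x j ^ ((b j : ℕ)) := by
      rw [ht b]; rfl
    rw [hsmul]
    exact Ideal.mul_mem_right _ _ (Ideal.pow_mem_pow (htK b) p)
  -- upper bound : K i ≤ J ^ (i+1)
  have h4 : ∀ i, K i ≤ J ^ (i + 1) := by
    intro i
    induction i with
    | zero => rw [pow_one]; exact le_of_eq hπ0ker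
    | succ i ih =>
      calc K (i + 1) ≤ (K i) ^ p := h3 i
        _ ≤ (J ^ (i + 1)) ^ p := Ideal.pow_right_mono ih p
        _ = J ^ ((i + 1) * p) := by rw [← pow_mul]
        _ ≤ J ^ (i + 2) := Ideal.pow_le_pow_right (by nlinarith)
  have h6 : ∀ i, K i ≤ J ^ i := fun i => (h4 i).trans (Ideal.pow_le_pow_right (by omega))
  -- lower bound : some power of J is contained in each K i
  have h5 : ∀ i, ∃ N, i ≤ N ∧ J ^ N ≤ K i := by
    intro i
    induction i with
    | zero => exact ⟨1, by omega, by rw [pow_one]; exact le_of_eq hπ0ker.symm⟩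
    | succ i ih =>
      obtain ⟨N, hiN, hN⟩ := ih
      obtain ⟨t, ht⟩ : (K i).FG := IsNoetherian.noetherian (K i)
      refine ⟨(N * (t.card * p + 1)) + (i + 1), by omega, ?_⟩
      have hKp : Ideal.span ((· ^ p) '' (t : Set S)) ≤ K (i + 1) := by
        rw [Ideal.span_le]
        rintro _ ⟨a, ha, rfl⟩
        exact h2 i a (ht ▸ Ideal.subset_span ha)
      calc J ^ ((N * (t.card * p + 1)) + (i + 1))
          ≤ J ^ (N * (t.card * p + 1)) := Ideal.pow_le_pow_right (by omega)
        _ = (J ^ N) ^ (t.card * p + 1) := by rw [← pow_mul]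
        _ ≤ (K i) ^ (t.card * p + 1) := Ideal.pow_right_mono hN _
        _ = (Ideal.span (t : Set S)) ^ (t.card * p + 1) := by rw [ht]
        _ ≤ Ideal.span ((· ^ p) '' (t : Set S)) := span_pow_card_mul_succ_le p t
        _ ≤ K (i + 1) := hKp
  -- choose a monotone sequence N with i ≤ N i and J ^ N i ≤ K i
  obtain ⟨N, hNmono, hNge, hNle⟩ :
      ∃ N : ℕ → ℕ, Monotone N ∧ (∀ i, i ≤ N i) ∧ ∀ i, J ^ (N i) ≤ K i := by
    choose f hf1 hf2 using h5
    refine ⟨fun i => Nat.rec (f 0) (fun i Ni => max Ni (f (i + 1))) i,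
      monotone_nat_of_le_succ (fun i => le_max_left _ _), ?_, ?_⟩
    · intro i
      exact le_trans (hf1 i) (by induction i with
        | zero => exact le_rfl
        | succ i ih => exact le_max_right _ _)
    · intro i
      have : f i ≤ Nat.rec (f 0) (fun i Ni => max Ni (f (i + 1))) i := by
        induction i with
        | zero => exact le_rfl
        | succ i ih => exact le_max_right _ _
      exact le_trans (Ideal.pow_le_pow_right this) (hf2 i)
  -- transporting along the tower
  have hBπ : ∀ {i k}, i ≤ k → ∀ s : S, πt k s = 0 → πt i s = 0 := by
    intro i k hik
    induction k, hik using Nat.le_induction with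
    | base => exact fun s h => h
    | succ k hik ih =>
      intro s h
      exact ih s (by rw [← hπcomp' k s, h, map_zero])
  have hBa : ∀ {i k}, i ≤ k → ∀ (s : S) (a : Rinf), πt k s = φproj k a → πt i s = φproj i a := by
    intro i k hik
    induction k, hik using Nat.le_induction with
    | base => exact fun s a h => h
    | succ k hik ih =>
      intro s a h
      refine ih s a ?_
      rw [← hπcomp' k s, h, hcomp' k a]
  -- the quotient maps
  have hQ : ∀ m : ℕ, (J ^ m • ⊤ : Ideal S) = J ^ m := fun m => by ext z; simp
  have hwd : ∀ (k : ℕ) (s s' : S), πt k s = πt k s' →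
      (Submodule.Quotient.mk s : S ⧸ (J ^ k • ⊤ : Ideal S)) = Submodule.Quotient.mk s' := by
    intro k s s' h
    rw [Submodule.Quotient.eq]
    have hm : s - s' ∈ K k := by simp [K, RingHom.mem_ker, map_sub, h]
    show s - s' ∈ (J ^ k • ⊤ : Ideal S)
    rw [hQ k]
    exact h6 k hm
  -- construction of πinf
  have hπsys : ∀ s : S, ∃ b : Rinf, ∀ i, φproj i b = πt i s := fun s =>
    hsurj (fun i => πt i s) (fun i => hπcomp' i s)
  choose f hf using hπsys
  have feq : ∀ (s : S) (b : Rinf), (∀ i, φproj i b = πt i s) → b = f s := by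
    intro s b hb
    have h0 : ∀ i, φproj i (b - f s) = 0 := fun i => by rw [map_sub, hb i, hf s i, sub_self]
    exact sub_eq_zero.mp (hinj _ h0)
  let πinf : S →+* Rinf :=
    { toFun := f
      map_one' := (feq 1 1 (fun i => by rw [map_one, map_one])).symm
      map_mul' := fun a b => (feq (a * b) (f a * f b)
        (fun i => by rw [map_mul, hf a i, hf b i, map_mul])).symm
      map_zero' := (feq 0 0 (fun i => by rw [map_zero, map_zero])).symm
      map_add' := fun a b => (feq (a + b) (f a + f b)
        (fun i => by rw [map_add, hf a i, hf b i, map_add])).symm }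
  have hφπ : ∀ i, (φproj i).comp πinf = πt i := fun i => RingHom.ext fun s => hf s i
  -- lifts along the surjections πt
  choose g hg using hπsurj
  -- the components of the map to the adic completion
  set seq : Rinf → ∀ k, S ⧸ (J ^ k • ⊤ : Ideal S) :=
    fun a k => Submodule.Quotient.mk (g k (φproj k a)) with hseq
  have hseqmk : ∀ (a : Rinf) (k : ℕ) (s : S), πt k s = φproj k a →
      seq a k = Submodule.Quotient.mk s := by
    intro a k s hs
    exact hwd k _ s (by rw [hg k (φproj k a), hs])
  have hcompat : ∀ (a : Rinf) {m k : ℕ} (hmk : m ≤ k),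
      AdicCompletion.transitionMap J S hmk (seq a k) = seq a m := by
    intro a m k hmk
    rw [hseq]
    simp only []
    rw [(show ∀ {m k : ℕ} (h : m ≤ k) (x : S), AdicCompletion.transitionMap J S h (Submodule.Quotient.mk x) = Submodule.Quotient.mk x from fun _ _ => rfl)]
    exact (hseqmk a m (g k (φproj k a)) (hBa hmk _ a (hg k (φproj k a)))).symm
  let u : Rinf →+* AdicCompletion J S :=
    { toFun := fun a => ⟨seq a, fun {m k} hmk => hcompat a hmk⟩
      map_one' := Subtype.ext <| funext fun k =>
        hseqmk 1 k 1 (by rw [map_one, map_one])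
      map_mul' := fun a b => Subtype.ext <| funext fun k =>
        hseqmk (a * b) k (g k (φproj k a) * g k (φproj k b))
          (by rw [map_mul, hg, hg, map_mul])
      map_zero' := Subtype.ext <| funext fun k =>
        hseqmk 0 k 0 (by rw [map_zero, map_zero])
      map_add' := fun a b => Subtype.ext <| funext fun k =>
        hseqmk (a + b) k (g k (φproj k a) + g k (φproj k b))
          (by rw [map_add, hg, hg, map_add]) }
  have huval : ∀ (a : Rinf) (k : ℕ), (u a).val k = seq a k := fun a k => rfl
  -- u is injective
  have huinj : Function.Injective u := by
    rw [injective_iff_map_eq_zero]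
    intro a ha
    refine hinj a fun i => ?_
    have hk : seq a (N i) = 0 := by
      rw [← huval a (N i), ha]
      rfl
    set s := g (N i) (φproj (N i) a) with hsdef
    have hsJ : s ∈ (J ^ (N i) • ⊤ : Ideal S) := by
      rwa [← Submodule.Quotient.mk_eq_zero]
    rw [hQ (N i)] at hsJ
    have hsK : s ∈ K i := hNle i hsJ
    have hπs : πt i s = φproj i a := hBa (hNge i) s a (hg (N i) _)
    rw [← hπs]
    exact hsK
  -- u is surjective
  have husurj : Function.Surjective u := by
    intro c
    choose t ht using fun i => Submodule.Quotient.mk_surjective _ (c.val (N i))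
    have hstep : ∀ i, φstep i (πt (i + 1) (t (i + 1))) = πt i (t i) := by
      intro i
      rw [hπcomp' i]
      have h1 : (Submodule.Quotient.mk (t (i + 1)) : S ⧸ (J ^ (N i) • ⊤ : Ideal S)) =
          Submodule.Quotient.mk (t i) := by
        have h2 := c.property (hNmono (Nat.le_succ i))
        rw [← ht (i + 1), (show ∀ {m k : ℕ} (h : m ≤ k) (x : S), AdicCompletion.transitionMap J S h (Submodule.Quotient.mk x) = Submodule.Quotient.mk x from fun _ _ => rfl)] at h2
        rw [h2, ht i]
      rw [Submodule.Quotient.eq, hQ (N i)] at h1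
      have : t (i + 1) - t i ∈ K i := hNle i h1
      have h3 : πt i (t (i + 1)) - πt i (t i) = 0 := by
        rw [← map_sub]
        exact this
      exact sub_eq_zero.mp h3
    obtain ⟨b, hb⟩ := hsurj (fun i => πt i (t i)) hstep
    refine ⟨b, ?_⟩
    apply Subtype.ext
    funext k
    have h1 : seq b k = Submodule.Quotient.mk (t k) := hseqmk b k (t k) (hb k).symm
    have h2 : (Submodule.Quotient.mk (t k) : S ⧸ (J ^ k • ⊤ : Ideal S)) = c.val k := by
      have h3 := c.property (hNge k)
      rw [← ht k, (show ∀ {m k : ℕ} (h : m ≤ k) (x : S), AdicCompletion.transitionMap J S h (Submodule.Quotient.mk x) = Submodule.Quotient.mk x from fun _ _ => rfl)] at h3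
      exact h3
    rw [huval b k, h1, h2]
  let e : Rinf ≃+* AdicCompletion J S := RingEquiv.ofBijective u ⟨huinj, husurj⟩
  refine ⟨πinf, ⟨hφπ, e, ?_⟩, ?_⟩
  · apply RingHom.ext
    intro s
    apply Subtype.ext
    funext k
    show seq (πinf s) k = _
    rw [hseqmk (πinf s) k s (hf s k).symm]
    rfl
  · rintro π' ⟨hπ', -⟩
    apply RingHom.ext
    intro s
    exact feq s (π' s) fun i => RingHom.congr_fun (hπ' i) s
end

section
/- Let R be a commutative ring of characteristic p with a p-basis x_1,...,x_n, viewed via the finite free extension R^p ⊆ R. Then Hom_{R^p}(R, R^p) is a free R-module of rank one, generated by the R^p-linear projection onto the coefficient of the monomial x_1^{p−1}···x_n^{p−1} in the p-basis expansion. -/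
set_option linter.unusedSectionVars false
set_option maxHeartbeats 800000
section aux
variable (p : ℕ) [Fact p.Prime] {R : Type*} [CommRing R]
  {n : ℕ} (x : Fin n → R) (b : Module.Basis (Fin n → Fin p) (pPowers R p) R)
  (hb : ∀ v : Fin n → Fin p, b v = ∏ i, x i ^ ((v i : ℕ)))

lemma pPow_mem (r : R) : r ^ p ∈ pPowers R p := Subring.subset_closure ⟨r, rfl⟩

lemma hp_pos : 0 < p := (Fact.out : p.Prime).pos

/-- the top index -/
def vtop : Fin n → Fin p := fun _ => ⟨p - 1, by have := hp_pos p; omega⟩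

include hb in
/-- decompose a general monomial -/
lemma prod_pow_eq (e : Fin n → ℕ) :
    (∏ i, x i ^ e i) =
      (⟨(∏ i, x i ^ (e i / p)) ^ p, pPow_mem p _⟩ : pPowers R p) •
        b (fun i => ⟨e i % p, Nat.mod_lt _ (hp_pos p)⟩) := by
  have h : ((⟨(∏ i, x i ^ (e i / p)) ^ p, pPow_mem p _⟩ : pPowers R p) •
        b (fun i => ⟨e i % p, Nat.mod_lt _ (hp_pos p)⟩) : R)
      = (∏ i, x i ^ (e i / p)) ^ p * ∏ i, x i ^ (e i % p) := by
    rw [show ((⟨(∏ i, x i ^ (e i / p)) ^ p, pPow_mem p _⟩ : pPowers R p) •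
        b (fun i => ⟨e i % p, Nat.mod_lt _ (hp_pos p)⟩) : R) =
        (∏ i, x i ^ (e i / p)) ^ p * b (fun i => ⟨e i % p, Nat.mod_lt _ (hp_pos p)⟩) from rfl,
      hb]
  rw [h, ← Finset.prod_pow, ← Finset.prod_mul_distrib]
  refine Finset.prod_congr rfl fun i _ => ?_
  rw [← pow_mul, ← pow_add, Nat.div_add_mod']

lemma coord_basis (w : Fin n → Fin p) :
    b.coord (vtop p) (b w) = if w = vtop p then 1 else 0 := by
  simp [Module.Basis.coord_apply, Module.Basis.repr_self, Finsupp.single_apply, eq_comm]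

lemma mod_key {a c : ℕ} (ha : a < p) (hc : c < p) :
    (a + (p - 1 - c)) % p = p - 1 ↔ a = c := by
  have hp2 : 2 ≤ p := (Fact.out : p.Prime).two_le
  rcases lt_trichotomy a c with h | h | h
  · rw [Nat.mod_eq_of_lt (by omega)]; omega
  · subst h; rw [Nat.mod_eq_of_lt (by omega)]; omega
  · rw [Nat.mod_eq_sub_mod (by omega), Nat.mod_eq_of_lt (by omega)]; omega

include hb in
lemma coord_basis_mul (w v : Fin n → Fin p) :
    b.coord (vtop p) (b w * ∏ i, x i ^ (p - 1 - (v i : ℕ)))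
      = if w = v then 1 else 0 := by
  have key : (b w * ∏ i, x i ^ (p - 1 - (v i : ℕ)))
      = ∏ i, x i ^ ((w i : ℕ) + (p - 1 - (v i : ℕ))) := by
    rw [hb, ← Finset.prod_mul_distrib]
    exact Finset.prod_congr rfl fun i _ => (pow_add _ _ _).symm
  rw [key, prod_pow_eq p x b hb, map_smul]
  by_cases hwv : w = v
  · subst hwv
    have h1 : (fun i => (⟨((w i : ℕ) + (p - 1 - (w i : ℕ))) % p,
        Nat.mod_lt _ (hp_pos p)⟩ : Fin p)) = vtop p := by
      funext i
      exact Fin.ext ((mod_key p (w i).isLt (w i).isLt).mpr rfl)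
    have h2 : ∀ i, ((w i : ℕ) + (p - 1 - (w i : ℕ))) / p = 0 := by
      intro i
      exact Nat.div_eq_of_lt (by have := (w i).isLt; omega)
    rw [h1, coord_basis, if_pos rfl, if_pos rfl, smul_eq_mul, mul_one]
    apply Subtype.ext
    simp [h2]
  · have h1 : (fun i => (⟨((w i : ℕ) + (p - 1 - (v i : ℕ))) % p,
        Nat.mod_lt _ (hp_pos p)⟩ : Fin p)) ≠ vtop p := by
      intro h
      apply hwv
      funext i
      have := congrFun h i
      exact Fin.ext ((mod_key p (w i).isLt (v i).isLt).mp (congrArg Fin.val this))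
    rw [coord_basis, if_neg h1, if_neg hwv, smul_zero]

include hb in
lemma coord_mul (s : R) (v : Fin n → Fin p) :
    b.coord (vtop p) (s * ∏ i, x i ^ (p - 1 - (v i : ℕ))) = b.repr s v := by
  conv_lhs => rw [← b.sum_repr s]
  rw [Finset.sum_mul, map_sum]
  have step : ∑ w, b.coord (vtop p) ((b.repr s w • b w) * ∏ i, x i ^ (p - 1 - (v i : ℕ)))
      = ∑ w, b.repr s w * (if w = v then 1 else 0) :=
    Finset.sum_congr rfl fun w _ => by
      rw [smul_mul_assoc, map_smul, coord_basis_mul p x b hb, smul_eq_mul]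
  rw [step]
  simp

end aux

/-- Let `R` be of characteristic `p` with a `p`-basis `x_1, …, x_n`, viewed via the finite
free extension `R^p ⊆ R`.  Then `Hom_{R^p}(R, R^p)` is a free `R`-module of rank one
(where `R` acts by premultiplication in the source), generated by the `R^p`-linear
projection `Φ` onto the coefficient of the monomial `x_1^{p−1} ⋯ x_n^{p−1}` in the
`p`-basis expansion. -/
theorem hom_to_pPowers_free_rank_one (p : ℕ) [Fact p.Prime]
    {R : Type*} [CommRing R] [CharP R p] (n : ℕ) (x : Fin n → R)
    (b : Module.Basis (Fin n → Fin p) (pPowers R p) R)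
    (hb : ∀ v : Fin n → Fin p, b v = ∏ i, x i ^ ((v i : ℕ))) :
    ∃ Φ : R →ₗ[pPowers R p] (pPowers R p),
      (∀ v : Fin n → Fin p,
        Φ (∏ i, x i ^ ((v i : ℕ))) = if (∀ i, (v i : ℕ) = p - 1) then 1 else 0) ∧
      ∀ ψ : R →ₗ[pPowers R p] (pPowers R p), ∃! r : R, ∀ a : R, ψ a = Φ (r * a) := by
  refine ⟨b.coord (vtop p), fun v => ?_, fun ψ => ?_⟩
  · rw [← hb, coord_basis]
    refine if_congr ⟨fun h i => ?_, fun h => ?_⟩ rfl rfl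
    · exact congrArg Fin.val (congrFun h i)
    · funext i; exact Fin.ext (h i)
  · have hr : ∀ a : R, ψ a = (b.coord (vtop p))
        ((∑ w, (ψ (b w) : R) * ∏ i, x i ^ (p - 1 - (w i : ℕ))) * a) := by
      intro a
      conv_lhs => rw [← b.sum_repr a]
      rw [map_sum, Finset.sum_mul, map_sum]
      have stepL : ∑ w, ψ (b.repr a w • b w) = ∑ w, b.repr a w * ψ (b w) :=
        Finset.sum_congr rfl fun w _ => by rw [map_smul, smul_eq_mul]
      have stepR : ∑ w, (b.coord (vtop p)) (((ψ (b w) : R) * ∏ i, x i ^ (p - 1 - (w i : ℕ))) * a)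
          = ∑ w, ψ (b w) * b.repr a w := by
        refine Finset.sum_congr rfl fun w _ => ?_
        have h1 : (((ψ (b w) : R) * ∏ i, x i ^ (p - 1 - (w i : ℕ))) * a)
            = ψ (b w) • (a * ∏ i, x i ^ (p - 1 - (w i : ℕ))) := by
          rw [show (ψ (b w) • (a * ∏ i, x i ^ (p - 1 - (w i : ℕ))) : R)
            = (ψ (b w) : R) * (a * ∏ i, x i ^ (p - 1 - (w i : ℕ))) from rfl]
          ring
        rw [h1, map_smul, coord_mul p x b hb, smul_eq_mul]
      rw [stepL, stepR]
      exact Finset.sum_congr rfl fun w _ => mul_comm _ _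
    refine ⟨_, hr, fun r' hr' => ?_⟩
    apply b.repr.injective
    ext v
    rw [← coord_mul p x b hb r' v, ← coord_mul p x b hb _ v, ← hr', ← hr]
end
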